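/- Let g be a finite-dimensional Lie algebra over an algebraically closed field of characteristic ≠ 2, with inner CPA-structure x·y = [φ(x),y] where φ is a Lie algebra automorphism all of whose eigenvalues are nonzero. Then the second derived subalgebra vanishes: [[g,g],[g,g]] = 0, i.e., g is metabelian. -/

import Mathlib

/-- Over an algebraically closed field of characteristic ≠ 2, a Lie algebra admitting an inner
CPA-structure `x·y = ⁅φ(x),y⁆` with `φ` a Lie algebra automorphism all of whose eigenvalues are
nonzero is metabelian: `[[g,g],[g,g]] = 0`. -/
theorem cpa_automorphism_metabelian
    (F : Type*) [Field F] [IsAlgClosed F] (h2 : (2 : F) ≠ 0)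
    (L : Type*) [LieRing L] [LieAlgebra F L] [FiniteDimensional F L]
    (φ : L →ₗ⁅F⁆ L) (hbij : Function.Bijective φ)
    (heig : ∀ α : F, Module.End.HasEigenvalue (φ : L →ₗ[F] L) α → α ≠ 0)
    (hcomm : ∀ x y : L, ⁅φ x, y⁆ = ⁅φ y, x⁆)
    (hpost : ∀ x y z : L, ⁅φ ⁅x, y⁆, z⁆ = ⁅φ x, ⁅φ y, z⁆⁆ - ⁅φ y, ⁅φ x, z⁆⁆)
    (hder : ∀ x y z : L, ⁅φ x, ⁅y, z⁆⁆ = ⁅⁅φ x, y⁆, z⁆ + ⁅y, ⁅φ x, z⁆⁆) :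
    ∀ x y z w : L, ⁅⁅x, y⁆, ⁅z, w⁆⁆ = 0 := by
  set f : Module.End F L := (φ : L →ₗ[F] L) with hf
  have hflie : ∀ x y : L, f ⁅x, y⁆ = ⁅f x, f y⁆ := fun x y => φ.map_lie x y
  have hcomm' : ∀ x y : L, ⁅f x, y⁆ = ⁅f y, x⁆ := fun x y => hcomm x y
  have happly : ∀ (μ : F) (v : L), (f - μ • 1) v = f v - μ • v := by
    intro μ v
    simp [LinearMap.sub_apply, LinearMap.smul_apply, Module.End.one_apply]
  have hmono : ∀ (g : Module.End F L) (p P : ℕ) (v : L), p ≤ P → (g ^ p) v = 0 →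
      (g ^ P) v = 0 := by
    intro g p P v h hv
    rw [← Nat.sub_add_cancel h, pow_add, Module.End.mul_apply, hv, map_zero]
  have hsucc : ∀ (μ : F) (m : ℕ) (v : L),
      ((f - μ • 1) ^ (m + 1)) v = ((f - μ • 1) ^ m) ((f - μ • 1) v) := by
    intro μ m v
    rw [pow_succ, Module.End.mul_apply]
  have hcommf : ∀ (μ : F) (n : ℕ) (v : L),
      ((f - μ • 1) ^ n) (f v) = f (((f - μ • 1) ^ n) v) := by
    intro μ n v
    have hc : Commute f ((f - μ • 1) ^ n) :=
      (Commute.sub_right (Commute.refl f) ((Commute.one_right f).smul_right μ)).pow_right n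
    calc ((f - μ • 1) ^ n) (f v) = (((f - μ • 1) ^ n) * f) v := rfl
      _ = (f * ((f - μ • 1) ^ n)) v := by rw [← hc.eq]
      _ = f (((f - μ • 1) ^ n) v) := rfl
  -- zero generalized eigenspace is trivial since φ is bijective
  have lem0 : ∀ (m : ℕ) (x : L), ((f - (0 : F) • 1) ^ m) x = 0 → x = 0 := by
    intro m x hx
    have hfm : (f ^ m) x = 0 := by simpa using hx
    have hinjf : Function.Injective (⇑f) := hbij.injective
    have hinj : Function.Injective (⇑(f ^ m)) := by
      have h1 : ⇑(f ^ m) = (⇑f)^[m] := funext fun v => Module.End.pow_apply f m v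
      rw [h1]
      exact Function.Injective.iterate hinjf m
    exact hinj (by rw [hfm, map_zero])
  -- Lemma B: brackets of generalized eigenvectors vanish unless eigenvalues sum to zero
  have lemB : ∀ (k m n : ℕ) (α β : F) (x y : L), m + n ≤ k → α + β ≠ 0 →
      ((f - α • 1) ^ m) x = 0 → ((f - β • 1) ^ n) y = 0 → ⁅x, y⁆ = 0 := by
    intro k
    induction k with
    | zero =>
      intro m n α β x y hmn _ hx _
      have hm : m = 0 := by omega
      subst hm
      have hx0 : x = 0 := by simpa using hx
      simp [hx0]
    | succ k ih =>
      intro m n α β x y hmn hab hx hy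
      rcases m with _ | m
      · have hx0 : x = 0 := by simpa using hx
        simp [hx0]
      rcases n with _ | n
      · have hy0 : y = 0 := by simpa using hy
        simp [hy0]
      have hx1 : ((f - α • 1) ^ m) ((f - α • 1) x) = 0 := by rw [← hsucc]; exact hx
      have hy1 : ((f - β • 1) ^ n) ((f - β • 1) y) = 0 := by rw [← hsucc]; exact hy
      have e1 : ⁅(f - α • 1) x, y⁆ = 0 :=
        ih m (n + 1) α β ((f - α • 1) x) y (by omega) hab hx1 hy
      have e2 : ⁅(f - β • 1) y, x⁆ = 0 :=
        ih n (m + 1) β α ((f - β • 1) y) x (by omega) (by rwa [add_comm]) hy1 hx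
      have hyx : ⁅y, x⁆ = -⁅x, y⁆ := neg_eq_iff_eq_neg.mp (lie_skew x y)
      have key : (α + β) • ⁅x, y⁆ = ⁅(f - β • 1) y, x⁆ - ⁅(f - α • 1) x, y⁆ := by
        rw [happly, happly, sub_lie, sub_lie, smul_lie, smul_lie, hcomm' x y, hyx]
        module
      have hz : (α + β) • ⁅x, y⁆ = 0 := by rw [key, e1, e2, sub_zero]
      exact (smul_eq_zero.mp hz).resolve_left hab
  -- Lemma A: brackets of generalized eigenvectors are generalized eigenvectors for the product
  have lemA : ∀ (k m n : ℕ) (α β : F) (x y : L), m + n ≤ k →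
      ((f - α • 1) ^ m) x = 0 → ((f - β • 1) ^ n) y = 0 →
      ∃ p : ℕ, ((f - (α * β) • 1) ^ p) ⁅x, y⁆ = 0 := by
    intro k
    induction k with
    | zero =>
      intro m n α β x y hmn hx _
      have hm : m = 0 := by omega
      subst hm
      have hx0 : x = 0 := by simpa using hx
      exact ⟨0, by simp [hx0]⟩
    | succ k ih =>
      intro m n α β x y hmn hx hy
      rcases m with _ | m
      · have hx0 : x = 0 := by simpa using hx
        exact ⟨0, by simp [hx0]⟩
      rcases n with _ | n
      · have hy0 : y = 0 := by simpa using hy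
        exact ⟨0, by simp [hy0]⟩
      have hx1 : ((f - α • 1) ^ m) ((f - α • 1) x) = 0 := by rw [← hsucc]; exact hx
      have hy1 : ((f - β • 1) ^ n) ((f - β • 1) y) = 0 := by rw [← hsucc]; exact hy
      have hfy : ((f - β • 1) ^ (n + 1)) (f y) = 0 := by rw [hcommf, hy, map_zero]
      obtain ⟨p₁, hp₁⟩ := ih m (n + 1) α β ((f - α • 1) x) (f y) (by omega) hx1 hfy
      obtain ⟨p₂, hp₂⟩ := ih (m + 1) n α β x ((f - β • 1) y) (by omega) hx hy1
      have key : (f - (α * β) • 1) ⁅x, y⁆ =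
          ⁅(f - α • 1) x, f y⁆ + α • ⁅x, (f - β • 1) y⁆ := by
        rw [happly, happly, happly, hflie, sub_lie, lie_sub, smul_sub, smul_lie, lie_smul,
          smul_smul]
        module
      refine ⟨max p₁ p₂ + 1, ?_⟩
      have e1 : ((f - (α * β) • 1) ^ max p₁ p₂) ⁅(f - α • 1) x, f y⁆ = 0 :=
        hmono _ p₁ _ _ (le_max_left _ _) hp₁
      have e2 : ((f - (α * β) • 1) ^ max p₁ p₂) ⁅x, (f - β • 1) y⁆ = 0 :=
        hmono _ p₂ _ _ (le_max_right _ _) hp₂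
      rw [hsucc, key, map_add, map_smul, e1, e2, smul_zero, add_zero]
  -- the core vanishing lemma for compatible eigenvalue quadruples
  have aux : ∀ (α γ : F) (mx my mz mw : ℕ) (x y z w : L),
      α ≠ 0 → α ^ 2 + 1 ≠ 0 → γ ≠ 0 →
      ((f - α • 1) ^ mx) x = 0 → ((f - (-α) • 1) ^ my) y = 0 →
      ((f - γ • 1) ^ mz) z = 0 → ((f - (-γ) • 1) ^ mw) w = 0 →
      ⁅⁅x, y⁆, ⁅z, w⁆⁆ = 0 := by
    intro α γ mx my mz mw x y z w hα hα1 hγ hx hy hz hw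
    obtain ⟨p, hp⟩ := lemA (mx + my) mx my α (-α) x y le_rfl hx hy
    obtain ⟨q, hq⟩ := lemA (p + mz) p mz (α * -α) γ ⁅x, y⁆ z le_rfl hp hz
    obtain ⟨r, hr⟩ := lemA (p + mw) p mw (α * -α) (-γ) ⁅x, y⁆ w le_rfl hp hw
    rw [leibniz_lie]
    have t1 : ⁅⁅⁅x, y⁆, z⁆, w⁆ = 0 := by
      have hne : α * -α * γ + -γ ≠ 0 := by
        intro hc
        have hγeq : γ * (α ^ 2 + 1) = 0 := by linear_combination -hc
        rcases mul_eq_zero.mp hγeq with h | h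
        · exact hγ h
        · exact hα1 h
      exact lemB (q + mw) q mw (α * -α * γ) (-γ) ⁅⁅x, y⁆, z⁆ w le_rfl hne hq hw
    have t2 : ⁅z, ⁅⁅x, y⁆, w⁆⁆ = 0 := by
      have hne : γ + α * -α * -γ ≠ 0 := by
        intro hc
        have hγeq : γ * (α ^ 2 + 1) = 0 := by linear_combination hc
        rcases mul_eq_zero.mp hγeq with h | h
        · exact hγ h
        · exact hα1 h
      exact lemB (mz + r) mz r γ (α * -α * -γ) z ⁅⁅x, y⁆, w⁆ le_rfl hne hz hr
    rw [t1, t2, add_zero]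
  -- main lemma: quadruple brackets of generalized eigenvectors vanish
  have main : ∀ (α β γ δ : F) (mx my mz mw : ℕ) (x y z w : L),
      ((f - α • 1) ^ mx) x = 0 → ((f - β • 1) ^ my) y = 0 →
      ((f - γ • 1) ^ mz) z = 0 → ((f - δ • 1) ^ mw) w = 0 →
      ⁅⁅x, y⁆, ⁅z, w⁆⁆ = 0 := by
    intro α β γ δ mx my mz mw x y z w hx hy hz hw
    by_cases hab : α + β = 0
    case neg => rw [lemB (mx + my) mx my α β x y le_rfl hab hx hy, zero_lie]
    by_cases hgd : γ + δ = 0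
    case neg => rw [lemB (mz + mw) mz mw γ δ z w le_rfl hgd hz hw, lie_zero]
    by_cases hα : α = 0
    · subst hα
      rw [lem0 mx x hx, zero_lie, zero_lie]
    by_cases hγ : γ = 0
    · subst hγ
      rw [lem0 mz z hz, zero_lie, lie_zero]
    have hβ : β = -α := by linear_combination hab
    have hδ : δ = -γ := by linear_combination hgd
    subst hβ hδ
    by_cases h1 : α ^ 2 + 1 = 0
    · by_cases hg1 : γ ^ 2 + 1 = 0
      · obtain ⟨p, hp⟩ := lemA (mx + my) mx my α (-α) x y le_rfl hx hy
        obtain ⟨q, hq⟩ := lemA (mz + mw) mz mw γ (-γ) z w le_rfl hz hw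
        have hne : α * -α + γ * -γ ≠ 0 := by
          intro hc
          exact h2 (by linear_combination h1 + hg1 + hc)
        exact lemB (p + q) p q (α * -α) (γ * -γ) ⁅x, y⁆ ⁅z, w⁆ le_rfl hne hp hq
      · have hsw : ⁅⁅z, w⁆, ⁅x, y⁆⁆ = 0 :=
          aux γ α mz mw mx my z w x y hγ hg1 hα hz hw hx hy
        rw [← lie_skew, hsw, neg_zero]
    · exact aux α γ mx my mz mw x y z w hα h1 hγ hx hy hz hw
  -- decomposition of the whole space into generalized eigenspaces
  have htop : ⨆ μ : F, f.maxGenEigenspace μ = ⊤ := Module.End.iSup_maxGenEigenspace_eq_top f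
  have memG : ∀ v : L, v ∈ ⨆ μ : F, f.maxGenEigenspace μ := by
    intro v
    rw [htop]
    exact Submodule.mem_top
  have step1 : ∀ (α β γ : F) (mx my mz : ℕ) (x y z : L),
      ((f - α • 1) ^ mx) x = 0 → ((f - β • 1) ^ my) y = 0 → ((f - γ • 1) ^ mz) z = 0 →
      ∀ w : L, ⁅⁅x, y⁆, ⁅z, w⁆⁆ = 0 := by
    intro α β γ mx my mz x y z hx hy hz w
    refine Submodule.iSup_induction (motive := fun w => ⁅⁅x, y⁆, ⁅z, w⁆⁆ = 0) _ (memG w)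
      (fun δ w' hw' => ?_) (by simp) (fun a b ha hb => ?_)
    · obtain ⟨mw, hmw⟩ := (Module.End.mem_maxGenEigenspace f δ w').mp hw'
      exact main α β γ δ mx my mz mw x y z w' hx hy hz hmw
    · rw [lie_add, lie_add, ha, hb, add_zero]
  have step2 : ∀ (α β : F) (mx my : ℕ) (x y : L),
      ((f - α • 1) ^ mx) x = 0 → ((f - β • 1) ^ my) y = 0 →
      ∀ z w : L, ⁅⁅x, y⁆, ⁅z, w⁆⁆ = 0 := by
    intro α β mx my x y hx hy z w
    refine Submodule.iSup_induction (motive := fun z => ⁅⁅x, y⁆, ⁅z, w⁆⁆ = 0) _ (memG z)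
      (fun γ z' hz' => ?_) (by simp) (fun a b ha hb => ?_)
    · obtain ⟨mz, hmz⟩ := (Module.End.mem_maxGenEigenspace f γ z').mp hz'
      exact step1 α β γ mx my mz x y z' hx hy hmz w
    · rw [add_lie, lie_add, ha, hb, add_zero]
  have step3 : ∀ (α : F) (mx : ℕ) (x : L), ((f - α • 1) ^ mx) x = 0 →
      ∀ y z w : L, ⁅⁅x, y⁆, ⁅z, w⁆⁆ = 0 := by
    intro α mx x hx y z w
    refine Submodule.iSup_induction (motive := fun y => ⁅⁅x, y⁆, ⁅z, w⁆⁆ = 0) _ (memG y)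
      (fun β y' hy' => ?_) (by simp) (fun a b ha hb => ?_)
    · obtain ⟨my, hmy⟩ := (Module.End.mem_maxGenEigenspace f β y').mp hy'
      exact step2 α β mx my x y' hx hmy z w
    · rw [lie_add, add_lie, ha, hb, add_zero]
  intro x y z w
  refine Submodule.iSup_induction (motive := fun x => ⁅⁅x, y⁆, ⁅z, w⁆⁆ = 0) _ (memG x)
    (fun α x' hx' => ?_) (by simp) (fun a b ha hb => ?_)
  · obtain ⟨mx, hmx⟩ := (Module.End.mem_maxGenEigenspace f α x').mp hx'
    exact step3 α mx x' hmx y z w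
  · rw [add_lie, add_lie, ha, hb, add_zero]
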